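/- Let m ≥ 5 be an integer with gcd(m,3) = 1. For integers j with 0 ≤ j ≤ m−1, the maximum of |sin(jπ/m)|·(√3 − |sin(jπ/m)|) equals sin((π/m)·⌊m/3⌋)·(√3 − sin((π/m)·⌊m/3⌋)) if m ≡ 1 (mod 3) and equals sin((π/m)·⌈m/3⌉)·(√3 − sin((π/m)·⌈m/3⌉)) if m ≡ 2 (mod 3), and this maximum is strictly less than 3/4. -/

import Mathlib

open Finset Filter Topology

noncomputable section

/-- `s n` is the number of 1's in the binary expansion of `n`. -/
def s (n : ℕ) : ℕ := (Nat.digits 2 n).count 1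

/-- `S m x = ∑_{0 ≤ n < x, m ∣ n} (-1)^(s n)`. -/
def S (m x : ℕ) : ℝ := ∑ n ∈ Finset.range x, if m ∣ n then (-1 : ℝ) ^ (s n) else 0

/-- `F α N = ∑_{n=0}^{N-1} e^{2πi(αn + s(n)/2)}`. -/
def F (α : ℝ) (N : ℕ) : ℂ :=
  ∑ n ∈ Finset.range N, Complex.exp (2 * Real.pi * Complex.I * ((α : ℂ) * n + (s n : ℂ) / 2))

/-- `bsq m = b_m ^ 2`, defined by cases on `m mod 3`. -/
def bsq (m : ℕ) : ℝ :=
  if m % 3 = 0 then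
    Real.sin (Real.pi / 3 * (1 + 3 / m)) * (Real.sqrt 3 - Real.sin (Real.pi / 3 * (1 + 3 / m)))
  else if m % 3 = 1 then
    Real.sin (Real.pi / 3 * (1 - 1 / m)) * (Real.sqrt 3 - Real.sin (Real.pi / 3 * (1 - 1 / m)))
  else
    Real.sin (Real.pi / 3 * (1 + 1 / m)) * (Real.sqrt 3 - Real.sin (Real.pi / 3 * (1 + 1 / m)))

/-- `b m` is the positive real number with `(b m)^2 = bsq m`. -/
def b (m : ℕ) : ℝ := Real.sqrt (bsq m)

/-- `lam m = λ_m = 1 + log₂ b_m`. -/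
def lam (m : ℕ) : ℝ := 1 + Real.logb 2 (b m)

/-- `mu m = μ_m = (2 b_m + 1)/(2 b_m - 1)`. -/
def mu (m : ℕ) : ℝ := (2 * b m + 1) / (2 * b m - 1)

/-- `U m x`: positive integers `≤ x` divisible by `m` and not by 3. -/
def U (m x : ℕ) : Finset ℕ := (Finset.Icc 1 x).filter (fun n => m ∣ n ∧ ¬ (3 ∣ n))

/-- `V p n`: positive integers `≤ n` whose least prime divisor is `p`. -/
def V (p n : ℕ) : Finset ℕ := (Finset.Icc 1 n).filter (fun j => Nat.minFac j = p)

open Real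

lemma aux_ub (x t : ℝ) (h : 0 ≤ (t - x) * (Real.sqrt 3 - t - x)) :
    x * (Real.sqrt 3 - x) ≤ t * (Real.sqrt 3 - t) := by nlinarith

lemma sinm {x y : ℝ} (hx : 0 ≤ x) (hy : y ≤ π/2) (hxy : x ≤ y) :
    Real.sin x ≤ Real.sin y :=
  Real.sin_le_sin_of_le_of_le_pi_div_two (by linarith [Real.pi_pos]) hy hxy

lemma argm {m : ℕ} (hm0 : (0:ℝ) < m) {x y : ℝ} (hxy : x ≤ y) : x*π/m ≤ y*π/m := by
  rw [mul_div_assoc, mul_div_assoc]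
  exact mul_le_mul_of_nonneg_right hxy (by positivity)

lemma key1 (a : ℝ) (ha0 : 0 < a) (ha : a ≤ π / 21) :
    Real.sqrt 3 ≤ Real.sin (π/3 - a) + Real.sin (π/3 + 2*a) := by
  have hpi : π < 3.15 := Real.pi_lt_d2
  have ha' : a ≤ 0.15 := by linarith
  have hpyth := Real.sin_sq_add_cos_sq a
  have hslt : Real.sin a < a := Real.sin_lt ha0
  have hspos : 0 < Real.sin a := Real.sin_pos_of_pos_of_lt_pi ha0 (by nlinarith [Real.pi_gt_three])
  have hc : 1 - a^2/2 ≤ Real.cos a := Real.one_sub_sq_div_two_le_cos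
  have hc1 : Real.cos a ≤ 1 := Real.cos_le_one a
  have hc' : (0.98 : ℝ) ≤ Real.cos a := by nlinarith
  have hsqrt : Real.sqrt 3 < 1.74 := by
    rw [show (1.74:ℝ) = Real.sqrt (1.74^2) from (Real.sqrt_sq (by norm_num)).symm]
    exact Real.sqrt_lt_sqrt (by norm_num) (by norm_num)
  have hsqrt0 : (0:ℝ) ≤ Real.sqrt 3 := Real.sqrt_nonneg 3
  rw [Real.sin_sub, Real.sin_add, Real.cos_two_mul, Real.sin_two_mul,
    Real.sin_pi_div_three, Real.cos_pi_div_three]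
  set s := Real.sin a
  set c := Real.cos a
  have h198 : 1.98 * (1 - c) ≤ s^2 := by nlinarith
  nlinarith [mul_pos hspos hspos, mul_le_mul_of_nonneg_left h198 hsqrt0,
    mul_lt_mul_of_pos_left (show s < 0.15 by linarith) hspos]

lemma key2 (a : ℝ) (ha0 : 0 < a) (ha : a ≤ π / 15) :
    Real.sin (π/3 + a) + Real.sin (π/3 - 2*a) ≤ Real.sqrt 3 := by
  have hpi : π < 3.15 := Real.pi_lt_d2
  have hpyth := Real.sin_sq_add_cos_sq a
  have hsnn : 0 ≤ Real.sin a :=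
    Real.sin_nonneg_of_nonneg_of_le_pi ha0.le (by nlinarith [Real.pi_gt_three])
  have hc : 1 - a^2/2 ≤ Real.cos a := Real.one_sub_sq_div_two_le_cos
  have hc1 : Real.cos a ≤ 1 := Real.cos_le_one a
  have hc' : (1/2 : ℝ) ≤ Real.cos a := by nlinarith
  have hsqrt0 : (0:ℝ) ≤ Real.sqrt 3 := Real.sqrt_nonneg 3
  rw [Real.sin_sub, Real.sin_add, Real.cos_two_mul, Real.sin_two_mul,
    Real.sin_pi_div_three, Real.cos_pi_div_three]
  nlinarith [mul_nonneg hsnn (show (0:ℝ) ≤ Real.cos a - 1/2 by linarith)]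

lemma half_aux (m p : ℕ) (hp : 2*(p+1) ≤ m) (t : ℝ)
    (h1 : Real.sin ((p:ℝ)*π/m) ≤ Real.sqrt 3 - t) (h1' : Real.sin ((p:ℝ)*π/m) ≤ t)
    (h2 : Real.sqrt 3 - t ≤ Real.sin (((p:ℝ)+1)*π/m)) (h2' : t ≤ Real.sin (((p:ℝ)+1)*π/m))
    (kk : ℕ) (hkk : 2*kk ≤ m) :
    Real.sin ((kk:ℝ)*π/m) * (Real.sqrt 3 - Real.sin ((kk:ℝ)*π/m)) ≤ t * (Real.sqrt 3 - t) := by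
  have hm0 : (0:ℝ) < m := by
    have : 0 < m := by omega
    exact_mod_cast this
  have hpi := Real.pi_pos
  have hkkhalf : (kk:ℝ)*π/m ≤ π/2 := by
    have hc : (2*kk : ℝ) ≤ m := by exact_mod_cast hkk
    rw [div_le_iff₀ hm0]
    push_cast at hc
    nlinarith
  rcases le_or_gt kk p with h | h
  · have hx : Real.sin ((kk:ℝ)*π/m) ≤ Real.sin ((p:ℝ)*π/m) := by
      apply sinm (by positivity) ?_ (argm hm0 (by exact_mod_cast h))
      have hc : (2*(p+1) : ℝ) ≤ m := by exact_mod_cast hp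
      rw [div_le_iff₀ hm0]
      push_cast at hc
      nlinarith
    exact aux_ub _ _ (mul_nonneg (by linarith) (by linarith))
  · have hx : Real.sin (((p:ℝ)+1)*π/m) ≤ Real.sin ((kk:ℝ)*π/m) := by
      apply sinm (by positivity) hkkhalf (argm hm0 ?_)
      have : p + 1 ≤ kk := h
      exact_mod_cast this
    refine aux_ub _ _ ?_
    nlinarith [mul_nonneg (show (0:ℝ) ≤ Real.sin ((kk:ℝ)*π/m) - t by linarith)
      (show (0:ℝ) ≤ Real.sin ((kk:ℝ)*π/m) - (Real.sqrt 3 - t) by linarith)]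

lemma main_aux (m p : ℕ) (hp : 2*(p+1) ≤ m) (t : ℝ)
    (h1 : Real.sin ((p:ℝ)*π/m) ≤ Real.sqrt 3 - t) (h1' : Real.sin ((p:ℝ)*π/m) ≤ t)
    (h2 : Real.sqrt 3 - t ≤ Real.sin (((p:ℝ)+1)*π/m)) (h2' : t ≤ Real.sin (((p:ℝ)+1)*π/m))
    (j : ℕ) (hj : j ≤ m - 1) :
    |Real.sin ((j:ℝ)*π/m)| * (Real.sqrt 3 - |Real.sin ((j:ℝ)*π/m)|) ≤ t * (Real.sqrt 3 - t) := by
  have hm0 : (0:ℝ) < m := by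
    have : 0 < m := by omega
    exact_mod_cast this
  have hpi := Real.pi_pos
  have hjm : (j:ℝ) ≤ m := by
    have : j ≤ m := by omega
    exact_mod_cast this
  have hθπ : (j:ℝ)*π/m ≤ π := by
    rw [div_le_iff₀ hm0]
    nlinarith
  have hsin0 : 0 ≤ Real.sin ((j:ℝ)*π/m) := Real.sin_nonneg_of_nonneg_of_le_pi (by positivity) hθπ
  rw [abs_of_nonneg hsin0]
  rcases le_total (2*j) m with hc | hc
  · exact half_aux m p hp t h1 h1' h2 h2' j (by omega)
  · have hxeq : Real.sin ((j:ℝ)*π/m) = Real.sin (((m - j : ℕ):ℝ)*π/m) := by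
      have hjm' : j ≤ m := by omega
      have hcast : ((m - j : ℕ) : ℝ) = (m : ℝ) - j := by push_cast [hjm']; ring
      rw [hcast, show ((m:ℝ) - j)*π/m = π - (j:ℝ)*π/m by field_simp, Real.sin_pi_sub]
    rw [hxeq]
    exact half_aux m p hp t h1 h1' h2 h2' (m - j) (by omega)

set_option maxHeartbeats 1000000 in
theorem stmt_10 (m : ℕ) (hm : 5 ≤ m) (hgcd : Nat.gcd m 3 = 1) :
    (IsGreatest
      ((fun j : ℕ =>
          |Real.sin ((j : ℝ) * Real.pi / m)| *
            (Real.sqrt 3 - |Real.sin ((j : ℝ) * Real.pi / m)|)) '' Set.Icc 0 (m - 1))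
      (if m % 3 = 1 then
          Real.sin (Real.pi / m * (⌊(m : ℝ) / 3⌋ : ℤ)) *
            (Real.sqrt 3 - Real.sin (Real.pi / m * (⌊(m : ℝ) / 3⌋ : ℤ)))
        else
          Real.sin (Real.pi / m * (⌈(m : ℝ) / 3⌉ : ℤ)) *
            (Real.sqrt 3 - Real.sin (Real.pi / m * (⌈(m : ℝ) / 3⌉ : ℤ))))) ∧
    (if m % 3 = 1 then
        Real.sin (Real.pi / m * (⌊(m : ℝ) / 3⌋ : ℤ)) *
          (Real.sqrt 3 - Real.sin (Real.pi / m * (⌊(m : ℝ) / 3⌋ : ℤ)))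
      else
        Real.sin (Real.pi / m * (⌈(m : ℝ) / 3⌉ : ℤ)) *
          (Real.sqrt 3 - Real.sin (Real.pi / m * (⌈(m : ℝ) / 3⌉ : ℤ)))) < 3 / 4 := by
  have hpi := Real.pi_pos
  have hm0 : (0:ℝ) < m := by positivity
  have h30 : m % 3 ≠ 0 := by
    intro h
    rw [Nat.gcd_comm, Nat.gcd_eq_left (Nat.dvd_of_mod_eq_zero h)] at hgcd
    omega
  have hsq32 : Real.sqrt 3 / 2 = Real.sin (π/3) := Real.sin_pi_div_three.symm
  rcases Nat.lt_or_ge (m % 3) 2 with hc | hc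
  · -- m % 3 = 1
    have hcase : m % 3 = 1 := by omega
    obtain ⟨k, hk2, hmk⟩ : ∃ k, 2 ≤ k ∧ m = 3*k+1 := ⟨m/3, by omega, by omega⟩
    have hmr : (m:ℝ) = 3*(k:ℝ)+1 := by rw [hmk]; push_cast; ring
    set a : ℝ := π/(3*(m:ℝ)) with ha_def
    have ha0 : 0 < a := by rw [ha_def]; positivity
    have ha21 : a ≤ π/21 := by
      rw [ha_def]
      have h21 : (21:ℝ) ≤ 3*m := by rw [hmr]; nlinarith [hk2, show (2:ℝ) ≤ k by exact_mod_cast hk2]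
      gcongr
    have hk : (k:ℝ)*π/m = π/3 - a := by
      rw [ha_def, hmr]
      have : (3*(k:ℝ)+1) ≠ 0 := by positivity
      field_simp
      ring
    have hk1 : ((k:ℝ)+1)*π/m = π/3 + 2*a := by
      rw [ha_def, hmr]
      have : (3*(k:ℝ)+1) ≠ 0 := by positivity
      field_simp
      ring
    have hfl : (⌊(m:ℝ)/3⌋ : ℤ) = (k:ℤ) := by
      rw [Int.floor_eq_iff]
      constructor
      · rw [hmr]; push_cast; linarith
      · rw [hmr]; push_cast; linarith
    have hang : π/(m:ℝ) * ((⌊(m:ℝ)/3⌋:ℤ):ℝ) = π/3 - a := by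
      rw [hfl, ← hk]; push_cast; ring
    rw [if_pos hcase, hang]
    set t := Real.sin (π/3 - a) with ht_def
    have hb1 : (0:ℝ) ≤ π/3 - a := by linarith
    have hb2 : π/3 - a ≤ π/2 := by linarith
    have ht2 : t ≤ Real.sqrt 3 / 2 := by
      rw [hsq32, ht_def]
      exact sinm hb1 (by linarith) (by linarith)
    have hkey := key1 a ha0 ha21
    have h2 : Real.sqrt 3 - t ≤ Real.sin (((k:ℝ)+1)*π/m) := by rw [hk1]; linarith
    have h2' : t ≤ Real.sin (((k:ℝ)+1)*π/m) := by linarith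
    have h1' : Real.sin ((k:ℝ)*π/m) ≤ t := by rw [hk]
    have h1 : Real.sin ((k:ℝ)*π/m) ≤ Real.sqrt 3 - t := by rw [hk]; linarith
    have hsinnn : 0 ≤ t := Real.sin_nonneg_of_nonneg_of_le_pi hb1 (by linarith)
    refine ⟨⟨⟨k, ⟨Nat.zero_le _, by omega⟩, ?_⟩, ?_⟩, ?_⟩
    · simp only
      rw [hk, abs_of_nonneg hsinnn]
    · rintro v ⟨j, hj, rfl⟩
      simp only [Set.mem_Icc] at hj
      exact main_aux m k (by omega) t h1 h1' h2 h2' j hj.2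
    · have htlt : t < Real.sqrt 3 / 2 := by
        rw [hsq32, ht_def]
        exact Real.strictMonoOn_sin ⟨by linarith, by linarith⟩
          ⟨by linarith, by linarith⟩ (by linarith)
      nlinarith [Real.sq_sqrt (show (0:ℝ) ≤ 3 by norm_num),
        mul_pos (sub_pos.2 htlt) (sub_pos.2 htlt)]
  · -- m % 3 = 2
    have hcase : m % 3 = 2 := by omega
    obtain ⟨k, hk1', hmk⟩ : ∃ k, 1 ≤ k ∧ m = 3*k+2 := ⟨m/3, by omega, by omega⟩
    have hmr : (m:ℝ) = 3*(k:ℝ)+2 := by rw [hmk]; push_cast; ring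
    set a : ℝ := π/(3*(m:ℝ)) with ha_def
    have ha0 : 0 < a := by rw [ha_def]; positivity
    have ha15 : a ≤ π/15 := by
      rw [ha_def]
      have h15 : (15:ℝ) ≤ 3*m := by rw [hmr]; nlinarith [show (1:ℝ) ≤ k by exact_mod_cast hk1']
      gcongr
    have hk : (k:ℝ)*π/m = π/3 - 2*a := by
      rw [ha_def, hmr]
      have : (3*(k:ℝ)+2) ≠ 0 := by positivity
      field_simp
      ring
    have hk1 : ((k:ℝ)+1)*π/m = π/3 + a := by
      rw [ha_def, hmr]
      have : (3*(k:ℝ)+2) ≠ 0 := by positivity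
      field_simp
      ring
    have hcl : (⌈(m:ℝ)/3⌉ : ℤ) = (k:ℤ)+1 := by
      rw [Int.ceil_eq_iff]
      constructor
      · rw [hmr]; push_cast; linarith
      · rw [hmr]; push_cast; linarith
    have hang : π/(m:ℝ) * ((⌈(m:ℝ)/3⌉:ℤ):ℝ) = π/3 + a := by
      rw [hcl, ← hk1]; push_cast; ring
    rw [if_neg (by omega), hang]
    set t := Real.sin (π/3 + a) with ht_def
    have hb1 : (0:ℝ) ≤ π/3 + a := by linarith
    have hb2 : π/3 + a ≤ π/2 := by linarith
    have ht2 : Real.sqrt 3 / 2 ≤ t := by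
      rw [hsq32, ht_def]
      exact sinm (by linarith) hb2 (by linarith)
    have hkey := key2 a ha0 ha15
    have h2' : t ≤ Real.sin (((k:ℝ)+1)*π/m) := by rw [hk1]
    have h2 : Real.sqrt 3 - t ≤ Real.sin (((k:ℝ)+1)*π/m) := by rw [hk1]; linarith
    have h1 : Real.sin ((k:ℝ)*π/m) ≤ Real.sqrt 3 - t := by rw [hk]; linarith
    have h1' : Real.sin ((k:ℝ)*π/m) ≤ t := by rw [hk]; linarith
    have hsinnn : 0 ≤ t := Real.sin_nonneg_of_nonneg_of_le_pi hb1 (by linarith)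
    refine ⟨⟨⟨k+1, ⟨Nat.zero_le _, by omega⟩, ?_⟩, ?_⟩, ?_⟩
    · simp only
      rw [show ((k+1:ℕ):ℝ) = (k:ℝ)+1 by push_cast; ring, hk1, abs_of_nonneg hsinnn]
    · rintro v ⟨j, hj, rfl⟩
      simp only [Set.mem_Icc] at hj
      exact main_aux m k (by omega) t h1 h1' h2 h2' j hj.2
    · have htlt : Real.sqrt 3 / 2 < t := by
        rw [hsq32, ht_def]
        exact Real.strictMonoOn_sin ⟨by linarith, by linarith⟩
          ⟨by linarith, by linarith⟩ (by linarith)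
      nlinarith [Real.sq_sqrt (show (0:ℝ) ≤ 3 by norm_num),
        mul_pos (sub_pos.2 htlt) (sub_pos.2 htlt)]
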